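/- Let ω ∈ W₀. Then ω satisfies (ω₁) if and only if there exist L ≥ 1 and C ≥ 0 such that inf_{s>0}(ω(s) + ω(4t²/s)) ≤ L·ω(t) + C for all t ≥ 0. -/
import Mathlib


open Real Filter Set

noncomputable section

/-- The class `LC` of normalized log-convex sequences with `(M_p)^{1/p} → ∞`. -/
def IsLC (M : ℕ → ℝ) : Prop :=
  (∀ p, 0 < M p) ∧ M 0 = 1 ∧ 1 ≤ M 1 ∧
  (∀ p : ℕ, 1 ≤ p → (M p) ^ 2 ≤ M (p - 1) * M (p + 1)) ∧
  Filter.Tendsto (fun p : ℕ => (M p) ^ ((p : ℝ)⁻¹)) Filter.atTop Filter.atTop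

/-- The sequence of quotients `μ_0 = 1`, `μ_p = M_p / M_{p-1}`. -/
def seqQuot (M : ℕ → ℝ) (p : ℕ) : ℝ :=
  if p = 0 then 1 else M p / M (p - 1)

/-- The associated weight function `ω_M(t) = sup_p log(t^p / M_p)`. -/
def omegaM (M : ℕ → ℝ) (t : ℝ) : ℝ :=
  ⨆ p : ℕ, Real.log (t ^ p / M p)

/-- The auxiliary sequence `M̃^a_p = (M_{ap})^{1/a}`. -/
def tildeSeq (M : ℕ → ℝ) (a : ℕ) (p : ℕ) : ℝ :=
  (M (a * p)) ^ ((a : ℝ)⁻¹)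

/-- Condition (genmg) for the parameter `d`. -/
def genMG (M : ℕ → ℝ) (d : ℕ) : Prop :=
  ∃ A : ℝ, 1 ≤ A ∧ ∀ p : ℕ, 1 ≤ p →
    seqQuot M p ≤ A * (M (d * p)) ^ (((d : ℝ) * (p : ℝ))⁻¹)

/-- The moderate growth index `g(M) ∈ ℕ ∪ {+∞}`. -/
def gIndex (M : ℕ → ℝ) : ℕ∞ :=
  sInf {e : ℕ∞ | ∃ n : ℕ, 0 < n ∧ genMG M n ∧ e = (n : ℕ∞)}

/-- The relation `M ≼ N`, i.e. `sup_{p ≥ 1} (M_p/N_p)^{1/p} < ∞`. -/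
def Preceq (M N : ℕ → ℝ) : Prop :=
  ∃ C : ℝ, ∀ p : ℕ, 1 ≤ p → (M p / N p) ^ ((p : ℝ)⁻¹) ≤ C

/-- The class `W₀` of normalized weight functions. -/
def IsW0 (ω : ℝ → ℝ) : Prop :=
  ContinuousOn ω (Set.Ici 0) ∧
  MonotoneOn ω (Set.Ici 0) ∧
  (∀ t ∈ Set.Icc (0 : ℝ) 1, ω t = 0) ∧
  Filter.Tendsto ω Filter.atTop Filter.atTop ∧
  (fun t => Real.log t) =o[Filter.atTop] ω ∧
  ConvexOn ℝ Set.univ (fun t => ω (Real.exp t))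

/-- The Legendre–Fenchel–Young conjugate `φ*_ω(x) = sup{xy − ω(e^y) : y ≥ 0}`. -/
def phiStar (ω : ℝ → ℝ) (x : ℝ) : ℝ :=
  sSup {z : ℝ | ∃ y : ℝ, 0 ≤ y ∧ z = x * y - ω (Real.exp y)}

/-- The associated weight matrix `W^(ℓ)_p = exp(φ*_ω(ℓp)/ℓ)`. -/
def Wmat (ω : ℝ → ℝ) (l : ℝ) (p : ℕ) : ℝ :=
  Real.exp (phiStar ω (l * p) / l)

/-- Condition `(ω₆)`. -/
def Omega6 (ω : ℝ → ℝ) : Prop :=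
  ∃ H : ℝ, 1 ≤ H ∧ ∀ t : ℝ, 0 ≤ t → 2 * ω t ≤ ω (H * t) + H

/-- The counting function `Σ_M(t) = #{p ≥ 1 : μ_p ≤ t}`. -/
def SigmaM (M : ℕ → ℝ) (t : ℝ) : ℕ :=
  Set.ncard {p : ℕ | 1 ≤ p ∧ seqQuot M p ≤ t}

end

theorem stmt17 (ω : ℝ → ℝ) (hω : IsW0 ω) :
    (∃ L : ℝ, 1 ≤ L ∧ ∀ t : ℝ, 0 ≤ t → ω (2 * t) ≤ L * (ω t + 1)) ↔
    (∃ L : ℝ, 1 ≤ L ∧ ∃ C : ℝ, 0 ≤ C ∧ ∀ t : ℝ, 0 ≤ t →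
      (⨅ s : Set.Ioi (0 : ℝ), (ω s.1 + ω (4 * t ^ 2 / s.1))) ≤ L * ω t + C) := by
  obtain ⟨hcont, hmono, hzero, htend, hlog, hconv⟩ := hω
  have hω0 : ω 0 = 0 := hzero 0 ⟨le_refl 0, zero_le_one⟩
  have hnn : ∀ x : ℝ, 0 ≤ x → 0 ≤ ω x := by
    intro x hx
    have := hmono (Set.mem_Ici.2 (le_refl (0:ℝ))) (Set.mem_Ici.2 hx) hx
    linarith [hω0]
  have hbdd : ∀ t : ℝ, 0 ≤ t →
      BddBelow (Set.range fun s : Set.Ioi (0:ℝ) => ω s.1 + ω (4 * t ^ 2 / s.1)) := by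
    intro t ht
    refine ⟨0, ?_⟩
    rintro z ⟨⟨s, hs⟩, rfl⟩
    have hs' : (0:ℝ) < s := hs
    have h1 : 0 ≤ ω s := hnn s hs'.le
    have h2 : 0 ≤ ω (4 * t ^ 2 / s) := hnn _ (by positivity)
    simpa using add_nonneg h1 h2
  constructor
  · rintro ⟨L, hL, h⟩
    refine ⟨2 * L, by linarith, 2 * L, by linarith, fun t ht => ?_⟩
    rcases eq_or_lt_of_le ht with rfl | htpos
    · have hle := ciInf_le (hbdd 0 le_rfl) (⟨1, by norm_num⟩ : Set.Ioi (0:ℝ))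
      have : ω 1 + ω (4 * (0:ℝ) ^ 2 / 1) = 0 := by
        have h1 : ω 1 = 0 := hzero 1 ⟨zero_le_one, le_refl 1⟩
        norm_num [h1, hω0]
      rw [this] at hle
      have := hnn 0 le_rfl
      nlinarith
    · have hle := ciInf_le (hbdd t ht) (⟨2 * t, by simpa using htpos⟩ : Set.Ioi (0:ℝ))
      have heq : 4 * t ^ 2 / (2 * t) = 2 * t := by
        field_simp; ring
      rw [heq] at hle
      have h2t := h t ht
      linarith
  · rintro ⟨L, hL, C, hC, h⟩
    refine ⟨L + C, by linarith, fun t ht => ?_⟩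
    have key : ω (2 * t) ≤ ⨅ s : Set.Ioi (0 : ℝ), (ω s.1 + ω (4 * t ^ 2 / s.1)) := by
      refine le_ciInf ?_
      rintro ⟨s, hs⟩
      have hs' : (0:ℝ) < s := hs
      rcases le_or_gt (2 * t) s with hcase | hcase
      · have h1 : ω (2 * t) ≤ ω s :=
          hmono (Set.mem_Ici.2 (by linarith)) (Set.mem_Ici.2 (by linarith)) hcase
        have h2 : 0 ≤ ω (4 * t ^ 2 / s) := hnn _ (by positivity)
        simpa using by linarith
      · have htpos : 0 < t := by nlinarith
        have hcase2 : 2 * t ≤ 4 * t ^ 2 / s := by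
          rw [le_div_iff₀ hs']
          nlinarith
        have h1 : ω (2 * t) ≤ ω (4 * t ^ 2 / s) :=
          hmono (Set.mem_Ici.2 (by linarith)) (Set.mem_Ici.2 (by positivity)) hcase2
        have h2 : 0 ≤ ω s := hnn s hs'.le
        simpa using by linarith
    have hωt : 0 ≤ ω t := hnn t ht
    have := h t ht
    nlinarith
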